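/- Let n ≥ 1, let σ be invertible mod n, and let a, b ∈ ℤ_n. Define (P_{σ,a,b} x)_i = x_{σ(i−a)} e^{−2πi σ b i / n} and π_{σ,b}(i) = σ(i−b) mod n. Then for all i, the Fourier transform satisfies (P_{σ,a,b} x)^∧_{π_{σ,b}(i)} = x̂_i e^{−2πi σ a i / n}. -/

import Mathlib

open Complex Real

noncomputable def chi (n : ℕ) (m : ZMod n) : ℂ :=
  Complex.exp (-(2 * Real.pi * Complex.I) * ((m.val : ℂ)) / n)

lemma chi_add (n : ℕ) [NeZero n] (m m' : ZMod n) :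
    chi n (m + m') = chi n m * chi n m' := by
  have hn : (n : ℂ) ≠ 0 := Nat.cast_ne_zero.mpr (NeZero.ne n)
  set ζ : ℂ := Complex.exp (-(2 * Real.pi * Complex.I) / n) with hζ
  have hpow : ∀ v : ℕ, Complex.exp (-(2 * Real.pi * Complex.I) * (v : ℂ) / n) = ζ ^ v := by
    intro v
    rw [hζ, ← Complex.exp_nat_mul]
    congr 1
    ring
  have hζn : ζ ^ n = 1 := by
    rw [hζ, ← Complex.exp_nat_mul,
      show (n : ℂ) * (-(2 * Real.pi * Complex.I) / n) = -(2 * Real.pi * Complex.I) by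
        field_simp]
    rw [Complex.exp_neg, Complex.exp_two_pi_mul_I, inv_one]
  have hmod : ∀ v : ℕ, ζ ^ (v % n) = ζ ^ v := by
    intro v
    conv_rhs => rw [← Nat.div_add_mod v n]
    rw [pow_add, pow_mul, hζn, one_pow, one_mul]
  show Complex.exp _ = Complex.exp _ * Complex.exp _
  rw [hpow, hpow, hpow, ZMod.val_add, hmod, pow_add]

theorem spectrum_permutation_property (n : ℕ) [NeZero n]
    (x : ZMod n → ℂ) (σ a b : ZMod n) (hσ : IsUnit σ)
    (F : (ZMod n → ℂ) → ZMod n → ℂ)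
    (hF : ∀ (y : ZMod n → ℂ) (k : ZMod n), F y k =
      (1 / (Real.sqrt n : ℂ)) * ∑ j : ZMod n,
        Complex.exp (-(2 * Real.pi * Complex.I) * ((k * j : ZMod n).val : ℂ) / n) * y j)
    (P : ZMod n → ℂ)
    (hP : ∀ i : ZMod n, P i =
      x (σ * (i - a)) *
        Complex.exp (-(2 * Real.pi * Complex.I) * ((σ * b * i : ZMod n).val : ℂ) / n)) :
    ∀ i : ZMod n, F P (σ * (i - b)) =
      F x i * Complex.exp (-(2 * Real.pi * Complex.I) * ((σ * a * i : ZMod n).val : ℂ) / n) := by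
  intro i
  obtain ⟨u, hu⟩ := hσ
  set τ : ZMod n := ((u⁻¹ : (ZMod n)ˣ) : ZMod n) with hτdef
  have hστ : σ * τ = 1 := by rw [← hu, hτdef]; exact_mod_cast u.mul_inv
  have hτσ : τ * σ = 1 := by rw [← hu, hτdef]; exact_mod_cast u.inv_mul
  have hbij : Function.Bijective (fun k : ZMod n => τ * k + a) := by
    apply Function.bijective_iff_has_inverse.mpr
    refine ⟨fun j => σ * (j - a), fun k => ?_, fun j => ?_⟩
    · simp only
      linear_combination k * hστ
    · simp only
      linear_combination (j - a) * hτσ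
  have key : (∑ j : ZMod n, Complex.exp (-(2 * Real.pi * Complex.I) *
        (((σ * (i - b)) * j : ZMod n).val : ℂ) / n) * P j)
      = (∑ j : ZMod n, Complex.exp (-(2 * Real.pi * Complex.I) *
          ((i * j : ZMod n).val : ℂ) / n) * x j) *
        Complex.exp (-(2 * Real.pi * Complex.I) * ((σ * a * i : ZMod n).val : ℂ) / n) := by
    show (∑ j : ZMod n, chi n ((σ * (i - b)) * j) * P j)
      = (∑ j : ZMod n, chi n (i * j) * x j) * chi n (σ * a * i)
    rw [Finset.sum_mul]
    refine (Fintype.sum_bijective (fun k : ZMod n => τ * k + a) hbij _ _ fun k => ?_).symm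
    rw [hP]
    have harg : σ * ((τ * k + a) - a) = k := by linear_combination k * hστ
    rw [harg, show Complex.exp (-(2 * Real.pi * Complex.I) * (((σ * b * (τ * k + a) : ZMod n)).val : ℂ) / n) = chi n (σ * b * (τ * k + a)) from rfl]
    have h1 : chi n ((σ * (i - b)) * (τ * k + a)) * chi n (σ * b * (τ * k + a))
        = chi n (i * k) * chi n (σ * a * i) := by
      rw [← chi_add, ← chi_add]
      congr 1
      linear_combination i * k * hστ
    linear_combination (-(x k)) * h1
  rw [hF, hF, key]
  ring
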